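/- Assume p ≤ 1/2 and let r := 4/p². For any f : X → (0,∞), with f_⋆(x) := max_{z∈X} r^{−d(x,z)}·f(z), one has (3·log 6)·E[f_⋆ − f] ≤ Ent(f). -/

import Mathlib

open Finset

noncomputable section

variable {X : Type*} [Fintype X] [DecidableEq X] [Nonempty X]

/-- Dirichlet form `E(f,g) = (1/2) ∑_{x,y} π(x) Q(x,y) (f(x)-f(y))(g(x)-g(y))`. -/
def dirichletForm (π : X → ℝ) (Q : X → X → ℝ) (f g : X → ℝ) : ℝ :=
  (1 / 2) * ∑ x : X, ∑ y : X, π x * Q x y * (f x - f y) * (g x - g y)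

/-- Mean `E[f] = ∑_x π(x) f(x)`. -/
def mean (π : X → ℝ) (f : X → ℝ) : ℝ := ∑ x : X, π x * f x

/-- Entropy `Ent(f) = E[f log f] - E[f] log E[f]`. -/
def entropy (π : X → ℝ) (f : X → ℝ) : ℝ :=
  mean π (fun x => f x * Real.log (f x)) - mean π f * Real.log (mean π f)

/-- Variance `Var(f) = E[f²] - E[f]²`. -/
def variance (π : X → ℝ) (f : X → ℝ) : ℝ :=
  mean π (fun x => f x ^ 2) - (mean π f) ^ 2

/-- Total jump rate `Q(x) = ∑_{y ≠ x} Q(x,y)`. -/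
def jumpRate (Q : X → X → ℝ) (x : X) : ℝ := ∑ y ∈ univ.erase x, Q x y

/-- Sparsity parameter `p = min_{(x,y) ∈ E} Q(x,y) / max(Q(x), Q(y,x))`. -/
def sparsity (Q : X → X → ℝ) : ℝ :=
  sInf {s : ℝ | ∃ x y : X, x ≠ y ∧ 0 < Q x y ∧
    s = Q x y / max (jumpRate Q x) (Q y x)}

/-- The transition graph `(X, E)` (symmetric since under reversibility
`Q(x,y) > 0 ↔ Q(y,x) > 0`). -/
def chainGraph (Q : X → X → ℝ) : SimpleGraph X where
  Adj x y := x ≠ y ∧ (0 < Q x y ∨ 0 < Q y x)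
  symm := by refine ⟨?_⟩; intro x y h; exact ⟨h.1.symm, h.2.symm⟩
  loopless := by refine ⟨?_⟩; intro x h; exact h.1 rfl

/-- Graph distance on `(X, E)`. -/
def graphDist (Q : X → X → ℝ) (x y : X) : ℕ := (chainGraph Q).dist x y

/-- Regularization `f⋆(x) = max_z r^{-d(x,z)} f(z)`. -/
def fStar (Q : X → X → ℝ) (r : ℝ) (f : X → ℝ) (x : X) : ℝ :=
  univ.sup' univ_nonempty (fun z => r ^ (-(graphDist Q x z : ℤ)) * f z)

/-- `(x,y)` is an allowed transition. -/
def IsEdge (Q : X → X → ℝ) (e : X × X) : Prop := e.1 ≠ e.2 ∧ 0 < Q e.1 e.2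

/-- The edge set `E = {(x,y) : x ≠ y, Q(x,y) > 0}` as a finset. -/
def edges (Q : X → X → ℝ) : Finset (X × X) :=
  univ.filter (fun e => e.1 ≠ e.2 ∧ 0 < Q e.1 e.2)

/-- Edge weight `c(x,y) = π(x) Q(x,y)`. -/
def edgeWeight (π : X → ℝ) (Q : X → X → ℝ) (e : X × X) : ℝ := π e.1 * Q e.1 e.2

/-- Distance between edges: `d(e,e') = ℓ - 1` where `ℓ` is the minimal length of a
path `(x_0, …, x_ℓ)` with `(x_0,x_1) = e` and `(x_{ℓ-1}, x_ℓ) = e'`. -/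
def edgeDist (Q : X → X → ℝ) (e e' : X × X) : ℕ :=
  sInf {n : ℕ | ∃ c : ℕ → X, c 0 = e.1 ∧ c 1 = e.2 ∧ c n = e'.1 ∧ c (n + 1) = e'.2 ∧
    ∀ i < n + 1, (chainGraph Q).Adj (c i) (c (i + 1))}

/-- `κ = max_{e' ∈ E} (1/c(e')) ∑_{e ∈ E} c(e) r^{-d(e,e')}`. -/
def kappa (π : X → ℝ) (Q : X → X → ℝ) (r : ℝ) : ℝ :=
  sSup {k : ℝ | ∃ e' ∈ edges Q, k = (1 / edgeWeight π Q e') *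
    ∑ e ∈ edges Q, edgeWeight π Q e * r ^ (-(edgeDist Q e e' : ℤ))}

/-- `H(w) = ((√w + 1)/(√w - 1)) log w` for `w ≠ 1`, and `H(1) = 4`. -/
def Hfun (w : ℝ) : ℝ :=
  if w = 1 then 4 else ((Real.sqrt w + 1) / (Real.sqrt w - 1)) * Real.log w

/-- A function is `r`-regular if `f(x) ≤ r f(y)` across every edge. -/
def IsRRegular (Q : X → X → ℝ) (r : ℝ) (f : X → ℝ) : Prop :=
  ∀ x y : X, x ≠ y → 0 < Q x y → f x ≤ r * f y

/-- Maximum degree of the graph `(X, E)`. -/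
def maxDegree (Q : X → X → ℝ) : ℕ :=
  univ.sup (fun x : X => Nat.card {y : X // (chainGraph Q).Adj x y})

/-- Irreducibility: every state can be reached from every other through allowed
transitions. -/
def MarkovIrreducible (Q : X → X → ℝ) : Prop :=
  ∀ x y : X, Relation.ReflTransGen (fun a b => a ≠ b ∧ 0 < Q a b) x y

lemma aux_L1 (t a : ℝ) (ht : 0 < t) (ha : 0 < a) : 0 ≤ t * Real.log (t / a) - t + a := by
  have h1 : Real.log (a / t) ≤ a / t - 1 := Real.log_le_sub_one_of_pos (by positivity)
  have h2 : Real.log (t / a) = - Real.log (a / t) := by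
    rw [← Real.log_inv]; congr 1; field_simp
  have h3 : 1 - a / t ≤ Real.log (t / a) := by rw [h2]; linarith
  have h4 : t * (1 - a / t) ≤ t * Real.log (t / a) := mul_le_mul_of_nonneg_left h3 ht.le
  have h5 : t * (1 - a / t) = t - a := by field_simp
  linarith

lemma aux_logdiv (t m c : ℝ) (ht : 0 < t) (hm : 0 < m) (hc : 0 < c) :
    Real.log (t / (c * m)) = Real.log (t / m) - Real.log c := by
  rw [Real.log_div ht.ne' (by positivity), Real.log_div ht.ne' hm.ne', Real.log_mul hc.ne' hm.ne']
  ring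

lemma aux_geom (M : ℕ) : ∑ d ∈ Finset.Icc 1 M, ((4:ℝ))⁻¹ ^ d ≤ 1/3 := by
  have key : ∀ N : ℕ, ∑ d ∈ Finset.Icc 1 N, ((4:ℝ))⁻¹ ^ d ≤ 1/3 - (1/3) * (4:ℝ)⁻¹ ^ N := by
    intro N
    induction N with
    | zero => simp
    | succ n ih =>
      rw [Finset.sum_Icc_succ_top (by omega), pow_succ]
      nlinarith [pow_pos (show (0:ℝ) < 4⁻¹ by norm_num) n]
  have h2 : (0:ℝ) < (4:ℝ)⁻¹ ^ M := pow_pos (by norm_num) M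
  linarith [key M]

lemma aux_log6_lt : Real.log 6 < 9/5 := by
  rw [Real.log_lt_iff_lt_exp (by norm_num)]
  have h9 : Real.exp (9/5) ^ (5:ℕ) = Real.exp 9 := by
    rw [← Real.exp_nat_mul]; norm_num
  have he : (2.7182818283:ℝ) < Real.exp 1 := Real.exp_one_gt_d9
  have h2 : (7776:ℝ) < Real.exp 9 := by
    have h : Real.exp 9 = Real.exp 1 ^ (9:ℕ) := by rw [← Real.exp_nat_mul]; norm_num
    rw [h]
    calc (7776:ℝ) < 2.7182818283 ^ (9:ℕ) := by norm_num
    _ < Real.exp 1 ^ (9:ℕ) := by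
        apply pow_lt_pow_left₀ he (by norm_num); norm_num
  have h3 : (6:ℝ) ^ (5:ℕ) < Real.exp (9/5) ^ (5:ℕ) := by rw [h9]; norm_num; linarith
  exact lt_of_pow_lt_pow_left₀ 5 (Real.exp_pos _).le h3

lemma aux_log6_pos : 0 < Real.log 6 := Real.log_pos (by norm_num)

lemma aux_K4 : 3 * Real.log 6 ≤ 4 * Real.log (269/54) := by
  have h1 : 3 * Real.log 6 = Real.log (6^(3:ℕ)) := by rw [Real.log_pow]; push_cast; ring
  have h2 : 4 * Real.log (269/54) = Real.log ((269/54:ℝ)^(4:ℕ)) := by rw [Real.log_pow]; push_cast; ring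
  rw [h1, h2]
  apply Real.log_le_log (by norm_num)
  norm_num

lemma aux_keyNumeric (M : ℕ) (T m : ℝ) (hT : 0 < T) (hm : 0 < m) :
    ∑ d ∈ Finset.Icc 1 M,
      max 0 ((3 * Real.log 6) * (4:ℝ)⁻¹ ^ d * T - (215/216) * m * (4:ℝ) ^ d)
      ≤ T * Real.log (T / m) - T + m := by
  set K := 3 * Real.log 6 with hK
  have hKpos : 0 < K := by have := aux_log6_pos; positivity
  have hRHS0 : 0 ≤ T * Real.log (T / m) - T + m := aux_L1 T m hT hm
  by_cases hcase : K * T ≤ 256 * ((215/216) * m)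
  · -- only d = 1 matters
    have hterm : ∀ d ∈ Finset.Icc 1 M,
        max 0 (K * (4:ℝ)⁻¹ ^ d * T - (215/216) * m * (4:ℝ) ^ d)
        ≤ (if d = 1 then max 0 (K * (4:ℝ)⁻¹ * T - (215/54) * m) else 0) := by
      intro d hd
      rcases eq_or_ne d 1 with h1 | h1
      · subst h1
        rw [if_pos rfl, pow_one, pow_one]
        apply le_of_eq; congr 1; ring
      · have hd2 : 2 ≤ d := by simp at hd; omega
        rw [if_neg h1]
        apply max_le le_rfl
        have hp4 : (0:ℝ) < (4:ℝ)⁻¹ ^ d := pow_pos (by norm_num) d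
        have h16 : (16:ℝ)^(2:ℕ) ≤ (4:ℝ)^d * (4:ℝ)^d := by
          rw [← pow_add]
          calc (16:ℝ)^(2:ℕ) = 4^(4:ℕ) := by norm_num
          _ ≤ (4:ℝ)^(d+d) := pow_le_pow_right₀ (by norm_num) (by omega)
        have hinv : (4:ℝ)⁻¹^d = ((4:ℝ)^d)⁻¹ := by rw [inv_pow]
        have h4pos : (0:ℝ) < (4:ℝ)^d := pow_pos (by norm_num) d
        -- K * (1/4^d) * T ≤ 256 * (215/216) m / 4^d ≤ (215/216) m 4^d
        have hA : K * (4:ℝ)⁻¹^d * T ≤ 256 * ((215/216)*m) * ((4:ℝ)^d)⁻¹ := by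
          rw [hinv]
          have := mul_le_mul_of_nonneg_right hcase (inv_nonneg.mpr h4pos.le)
          calc K * ((4:ℝ)^d)⁻¹ * T = (K*T) * ((4:ℝ)^d)⁻¹ := by ring
          _ ≤ _ := this
        have hB : 256 * ((215/216)*m) * ((4:ℝ)^d)⁻¹ ≤ (215/216) * m * (4:ℝ)^d := by
          have h256 : (256:ℝ) ≤ (4:ℝ)^d * (4:ℝ)^d := by norm_num at h16 ⊢; linarith
          have hstep : 256 * ((215/216)*m) ≤ (215/216)*m*((4:ℝ)^d*(4:ℝ)^d) := by nlinarith [hm.le]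
          calc 256 * ((215/216)*m) * ((4:ℝ)^d)⁻¹ ≤ (215/216)*m*((4:ℝ)^d*(4:ℝ)^d) * ((4:ℝ)^d)⁻¹ :=
                mul_le_mul_of_nonneg_right hstep (inv_nonneg.mpr h4pos.le)
          _ = (215/216)*m*(4:ℝ)^d := by field_simp
        linarith
    calc ∑ d ∈ Finset.Icc 1 M, max 0 (K * (4:ℝ)⁻¹ ^ d * T - (215/216) * m * (4:ℝ) ^ d)
        ≤ ∑ d ∈ Finset.Icc 1 M, (if d = 1 then max 0 (K * (4:ℝ)⁻¹ * T - (215/54) * m) else 0) :=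
          Finset.sum_le_sum hterm
    _ = (if 1 ∈ Finset.Icc 1 M then max 0 (K * (4:ℝ)⁻¹ * T - (215/54) * m) else 0) := by
          rw [Finset.sum_ite_eq' (Finset.Icc 1 M) 1]
    _ ≤ T * Real.log (T / m) - T + m := by
          split
          · -- need max 0 (K/4 T − 215/54 m) ≤ RHS
            apply max_le hRHS0
            have h1 := aux_L1 T ((269/54) * m) hT (by positivity)
            rw [aux_logdiv T m (269/54) hT hm (by norm_num)] at h1
            have h2 : K/4 * T ≤ Real.log (269/54) * T := by
              apply mul_le_mul_of_nonneg_right _ hT.le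
              rw [hK]; linarith [aux_K4]
            nlinarith
          · exact hRHS0
  · -- large T case
    push_neg at hcase
    have hterm : ∀ d ∈ Finset.Icc 1 M,
        max 0 (K * (4:ℝ)⁻¹ ^ d * T - (215/216) * m * (4:ℝ) ^ d) ≤ K * T * (4:ℝ)⁻¹ ^ d := by
      intro d _
      apply max_le
      · positivity
      · have : (0:ℝ) ≤ (215/216) * m * (4:ℝ)^d := by positivity
        nlinarith
    have hsum : ∑ d ∈ Finset.Icc 1 M, max 0 (K * (4:ℝ)⁻¹ ^ d * T - (215/216) * m * (4:ℝ) ^ d)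
        ≤ K * T * (1/3) := by
      calc _ ≤ ∑ d ∈ Finset.Icc 1 M, K * T * (4:ℝ)⁻¹ ^ d := Finset.sum_le_sum hterm
      _ = K * T * ∑ d ∈ Finset.Icc 1 M, (4:ℝ)⁻¹ ^ d := by rw [Finset.mul_sum]
      _ ≤ K * T * (1/3) := by
          apply mul_le_mul_of_nonneg_left (aux_geom M) (by positivity)
    have hKT3 : K * T * (1/3) = Real.log 6 * T := by rw [hK]; ring
    -- T log 6 ≤ RHS since T ≥ 6 e m
    have hT6 : 6 * Real.exp 1 * m ≤ T := by
      have he : Real.exp 1 < 2.7182818286 := Real.exp_one_lt_d9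
      have hl6 := aux_log6_lt
      have h1 : K < 27/5 := by rw [hK]; linarith
      have hKT : 256 * ((215/216) * m) < K * T := hcase
      -- 6 e m ≤ (256*215/216/K) m < T
      have h2 : 6 * Real.exp 1 * K < 256 * (215/216) := by nlinarith [aux_log6_pos, Real.exp_pos 1]
      nlinarith [Real.exp_pos 1, hm, hT, hKpos]
    have h1 := aux_L1 T (6 * Real.exp 1 * m) hT (by positivity)
    have h2 : Real.log (T / (6 * Real.exp 1 * m)) = Real.log (T/m) - Real.log 6 - 1 := by
      rw [show 6 * Real.exp 1 * m = (6 * Real.exp 1) * m by ring,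
        aux_logdiv T m (6 * Real.exp 1) hT hm (by positivity),
        Real.log_mul (by norm_num) (Real.exp_pos 1).ne', Real.log_exp]
      ring
    rw [h2] at h1
    -- h1: 0 ≤ T(log(T/m) − log6 − 1) − T + 6em
    have : Real.log 6 * T ≤ T * Real.log (T/m) - T + m := by nlinarith [hm.le]
    linarith [hsum, hKT3.le, this]

-- psi lower bound: ψm(s) ≥ (215/216) m − K s
lemma aux_psi_lower (s m : ℝ) (hs : 0 < s) (hm : 0 < m) :
    (215/216) * m - (3 * Real.log 6) * s ≤ s * Real.log (s / m) - s + m := by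
  have h := aux_L1 s ((1/216) * m) hs (by positivity)
  have h2 : Real.log (s / ((1/216) * m)) = Real.log (s/m) - Real.log (1/216) := aux_logdiv s m (1/216) hs hm (by norm_num)
  have h3 : Real.log (1/216 : ℝ) = - (3 * Real.log 6) := by
    rw [show (1/216:ℝ) = (6^(3:ℕ))⁻¹ by norm_num, Real.log_inv, Real.log_pow]
    push_cast; ring
  rw [h2, h3] at h
  nlinarith [h]


set_option maxHeartbeats 1600000 in
theorem mean_fStar_sub_le_entropy
    (π : X → ℝ) (Q : X → X → ℝ)
    (hQ : ∀ x y : X, x ≠ y → 0 ≤ Q x y)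
    (hQsum : ∀ x : X, ∑ y : X, Q x y = 0)
    (hirr : MarkovIrreducible Q)
    (hπpos : ∀ x : X, 0 < π x)
    (hπsum : ∑ x : X, π x = 1)
    (hrev : ∀ x y : X, π x * Q x y = π y * Q y x)
    (hp : sparsity Q ≤ 1 / 2) (f : X → ℝ) (hf : ∀ x, 0 < f x) :
     (3 * Real.log 6) * mean π (fun x => fStar Q (4 / sparsity Q ^ 2) f x - f x) ≤
      entropy π f := by
  by_cases htriv : ∀ x y : X, x = y
  · -- trivial one-point case
    obtain ⟨x₀⟩ := (inferInstance : Nonempty X)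
    have huniv : (univ : Finset X) = {x₀} := by
      apply Finset.eq_singleton_iff_unique_mem.mpr
      exact ⟨mem_univ _, fun y _ => htriv y x₀⟩
    have hπ1 : π x₀ = 1 := by rw [← hπsum, huniv, Finset.sum_singleton]
    have hfs : fStar Q (4 / sparsity Q ^ 2) f x₀ = f x₀ := by
      apply le_antisymm
      · apply Finset.sup'_le
        intro z _
        have hz : z = x₀ := htriv z x₀
        subst hz
        have h0 : graphDist Q z z = 0 := SimpleGraph.dist_self
        rw [h0]
        simp
      · have h0 : graphDist Q x₀ x₀ = 0 := SimpleGraph.dist_self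
        have h1 := Finset.le_sup' (fun z => (4 / sparsity Q ^ 2) ^ (-(graphDist Q x₀ z : ℤ)) * f z)
          (mem_univ x₀)
        rw [h0] at h1
        exact le_trans (le_of_eq (by norm_num)) h1
    have hmean0 : mean π (fun x => fStar Q (4 / sparsity Q ^ 2) f x - f x) = 0 := by
      rw [mean, huniv, Finset.sum_singleton, hfs]; ring
    have hent : entropy π f = 0 := by
      rw [entropy, mean, mean, huniv, Finset.sum_singleton, Finset.sum_singleton, hπ1]
      ring
    rw [hmean0, hent]; simp
  · push_neg at htriv
    obtain ⟨u₀, v₀, huv⟩ := htriv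
    set p := sparsity Q with hpdef
    set r := 4 / p ^ 2 with hrdef
    -- edge symmetry
    have hQsymm : ∀ x y : X, 0 < Q x y → 0 < Q y x := by
      intro x y h
      have h1 := hrev x y
      have h2 := hπpos x
      have h3 := hπpos y
      nlinarith
    -- existence of an edge
    obtain ⟨w₀, hw₀⟩ : ∃ w, u₀ ≠ w ∧ 0 < Q u₀ w := by
      rcases (Relation.ReflTransGen.cases_head (hirr u₀ v₀)) with h | ⟨c, hc, -⟩
      · exact absurd h huv
      · exact ⟨c, hc⟩
    -- jump rate bounds
    have hJR : ∀ x y : X, x ≠ y → Q x y ≤ jumpRate Q x := by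
      intro x y hxy
      show Q x y ≤ ∑ y ∈ univ.erase x, Q x y
      apply Finset.single_le_sum (f := fun y => Q x y)
      · intro i hi
        exact hQ x i (fun h => (Finset.mem_erase.mp hi).1 h.symm) 
      · exact Finset.mem_erase.mpr ⟨fun h => hxy h.symm, mem_univ y⟩
    -- sparsity facts
    have hSmem : ∀ x y : X, x ≠ y → 0 < Q x y →
        Q x y / max (jumpRate Q x) (Q y x) ∈
        {s : ℝ | ∃ x y : X, x ≠ y ∧ 0 < Q x y ∧ s = Q x y / max (jumpRate Q x) (Q y x)} := by
      intro x y h1 h2; exact ⟨x, y, h1, h2, rfl⟩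
    have hSfin : {s : ℝ | ∃ x y : X, x ≠ y ∧ 0 < Q x y ∧
        s = Q x y / max (jumpRate Q x) (Q y x)}.Finite := by
      apply Set.Finite.subset (Set.finite_range
        (fun e : X × X => Q e.1 e.2 / max (jumpRate Q e.1) (Q e.2 e.1)))
      rintro s ⟨x, y, -, -, rfl⟩
      exact ⟨(x, y), rfl⟩
    have hSpos : ∀ s ∈ {s : ℝ | ∃ x y : X, x ≠ y ∧ 0 < Q x y ∧
        s = Q x y / max (jumpRate Q x) (Q y x)}, 0 < s := by
      rintro s ⟨x, y, h1, h2, rfl⟩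
      have : 0 < max (jumpRate Q x) (Q y x) := lt_max_of_lt_left (lt_of_lt_of_le h2 (hJR x y h1))
      positivity
    have hSbdd : BddBelow {s : ℝ | ∃ x y : X, x ≠ y ∧ 0 < Q x y ∧
        s = Q x y / max (jumpRate Q x) (Q y x)} := hSfin.bddBelow
    have hppos : 0 < p := by
      rw [hpdef, sparsity]
      exact hSpos _ (Set.Nonempty.csInf_mem ⟨_, hSmem u₀ w₀ hw₀.1 hw₀.2⟩ hSfin)
    have hple : ∀ x y : X, x ≠ y → 0 < Q x y →
        p ≤ Q x y / max (jumpRate Q x) (Q y x) := by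
      intro x y h1 h2
      exact csInf_le hSbdd (hSmem x y h1 h2)
    have hp12 : p ≤ 1/2 := hp
    have hrpos : 0 < r := by rw [hrdef]; positivity
    have hr16 : 16 ≤ r := by
      rw [hrdef]
      rw [le_div_iff₀ (by positivity)]
      nlinarith
    have hr1 : 1 ≤ r := by linarith
    -- p Q y x ≤ Q x y across edges
    have hpQ : ∀ x y : X, x ≠ y → 0 < Q x y →
        p * Q y x ≤ Q x y ∧ p * jumpRate Q x ≤ Q x y := by
      intro x y h1 h2
      have hmax : 0 < max (jumpRate Q x) (Q y x) :=
        lt_max_of_lt_left (lt_of_lt_of_le h2 (hJR x y h1))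
      have h3 : p * max (jumpRate Q x) (Q y x) ≤ Q x y :=
        (le_div_iff₀ hmax).mp (hple x y h1 h2)
      constructor
      · exact le_trans (mul_le_mul_of_nonneg_left (le_max_right _ _) hppos.le) h3
      · exact le_trans (mul_le_mul_of_nonneg_left (le_max_left _ _) hppos.le) h3
    letI : DecidableRel (chainGraph Q).Adj :=
      fun a b => decidable_of_iff (a ≠ b ∧ (0 < Q a b ∨ 0 < Q b a)) Iff.rfl
    have hAdjQ : ∀ x y : X, (chainGraph Q).Adj x y → x ≠ y ∧ 0 < Q x y := by
      rintro x y ⟨hne, h | h⟩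
      · exact ⟨hne, h⟩
      · exact ⟨hne, hQsymm y x h⟩
    have hQAdj : ∀ x y : X, x ≠ y → 0 < Q x y → (chainGraph Q).Adj x y :=
      fun x y h1 h2 => ⟨h1, Or.inl h2⟩
    -- π ratio along an edge
    have hedge_pi : ∀ x y : X, (chainGraph Q).Adj x y → π x ≤ p⁻¹ * π y := by
      intro x y hadj
      obtain ⟨hne, hq⟩ := hAdjQ x y hadj
      have h1 : p * Q y x ≤ Q x y := (hpQ x y hne hq).1
      have h2 := hrev x y
      have h3 := hπpos y
      have h4 : p * (π x * Q x y) ≤ π y * Q x y := by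
        rw [h2]
        calc p * (π y * Q y x) = π y * (p * Q y x) := by ring
        _ ≤ π y * Q x y := mul_le_mul_of_nonneg_left h1 h3.le
      have h5 : p * π x ≤ π y := by
        have := mul_le_mul_of_nonneg_right h4 (inv_nonneg.mpr hq.le)
        calc p * π x = p * (π x * Q x y) * (Q x y)⁻¹ := by field_simp
        _ ≤ π y * Q x y * (Q x y)⁻¹ := this
        _ = π y := by field_simp
      calc π x = p⁻¹ * (p * π x) := by field_simp
      _ ≤ p⁻¹ * π y := mul_le_mul_of_nonneg_left h5 (inv_nonneg.mpr hppos.le)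
    -- connectivity
    have hconn : (chainGraph Q).Connected := by
      rw [SimpleGraph.connected_iff]
      refine ⟨fun x y => ?_, inferInstance⟩
      rw [SimpleGraph.reachable_iff_reflTransGen]
      exact Relation.ReflTransGen.mono (fun a b hab => ⟨hab.1, Or.inl hab.2⟩) x y (hirr x y)
    -- π ratio along walks
    have hwalk_pi : ∀ (x z : X) (w : (chainGraph Q).Walk x z), π x ≤ p⁻¹ ^ w.length * π z := by
      intro x z w
      induction w with
      | nil => simp
      | @cons a b c hab w ih =>
        have h1 : π a ≤ p⁻¹ * π b := hedge_pi a b hab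
        have h2 : p⁻¹ * π b ≤ p⁻¹ * (p⁻¹ ^ w.length * π c) :=
          mul_le_mul_of_nonneg_left ih (inv_nonneg.mpr hppos.le)
        calc π a ≤ p⁻¹ * (p⁻¹ ^ w.length * π c) := h1.trans h2
        _ = p⁻¹ ^ (w.cons hab).length * π c := by
            rw [SimpleGraph.Walk.length_cons, pow_succ]; ring
    have hdist_pi : ∀ x z : X, π x ≤ p⁻¹ ^ (graphDist Q x z) * π z := by
      intro x z
      obtain ⟨w, hw⟩ := hconn.exists_walk_length_eq_dist x z
      have := hwalk_pi x z w
      rwa [hw] at this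
    -- degree bound
    have hdeg : ∀ u : X, (((chainGraph Q).neighborFinset u).card : ℝ) ≤ p⁻¹ := by
      intro u
      rcases Finset.eq_empty_or_nonempty ((chainGraph Q).neighborFinset u) with h | ⟨y₁, hy₁⟩
      · rw [h]; simp; positivity
      · have hy₁' := hAdjQ u y₁ (by simpa [SimpleGraph.mem_neighborFinset] using hy₁)
        have hJRu : 0 < jumpRate Q u := lt_of_lt_of_le hy₁'.2 (hJR u y₁ hy₁'.1)
        have hsum1 : ∀ y ∈ (chainGraph Q).neighborFinset u, p * jumpRate Q u ≤ Q u y := by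
          intro y hy
          have h := hAdjQ u y (by simpa [SimpleGraph.mem_neighborFinset] using hy)
          exact (hpQ u y h.1 h.2).2
        have hsub : (chainGraph Q).neighborFinset u ⊆ univ.erase u := by
          intro y hy
          have h := hAdjQ u y (by simpa [SimpleGraph.mem_neighborFinset] using hy)
          exact Finset.mem_erase.mpr ⟨fun hh => h.1 hh.symm, mem_univ _⟩
        have h2 : (((chainGraph Q).neighborFinset u).card : ℝ) * (p * jumpRate Q u)
            ≤ jumpRate Q u := by
          calc (((chainGraph Q).neighborFinset u).card : ℝ) * (p * jumpRate Q u)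
              ≤ ∑ y ∈ (chainGraph Q).neighborFinset u, Q u y := by
                have hn := Finset.card_nsmul_le_sum ((chainGraph Q).neighborFinset u)
                  (fun y => Q u y) (p * jumpRate Q u) hsum1
                rwa [nsmul_eq_mul] at hn
          _ ≤ ∑ y ∈ univ.erase u, Q u y := by
              apply Finset.sum_le_sum_of_subset_of_nonneg hsub
              intro i hi _
              exact hQ u i (fun h => (Finset.mem_erase.mp hi).1 h.symm)
          _ = jumpRate Q u := rfl
        have h3 : (((chainGraph Q).neighborFinset u).card : ℝ) * p ≤ 1 := by
          have := mul_le_mul_of_nonneg_right h2 (inv_nonneg.mpr hJRu.le)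
          calc (((chainGraph Q).neighborFinset u).card : ℝ) * p
              = ((((chainGraph Q).neighborFinset u).card : ℝ) * (p * jumpRate Q u)) * (jumpRate Q u)⁻¹ := by
                field_simp
          _ ≤ jumpRate Q u * (jumpRate Q u)⁻¹ := this
          _ = 1 := by field_simp
        calc (((chainGraph Q).neighborFinset u).card : ℝ)
            = ((((chainGraph Q).neighborFinset u).card : ℝ) * p) * p⁻¹ := by field_simp
        _ ≤ 1 * p⁻¹ := by
            apply mul_le_mul_of_nonneg_right h3 (inv_nonneg.mpr hppos.le)
        _ = p⁻¹ := one_mul _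
    -- sphere cardinality bound
    have hsph : ∀ (z : X) (d : ℕ),
        ((univ.filter (fun v => graphDist Q v z = d)).card : ℝ) ≤ p⁻¹ ^ d := by
      intro z d
      induction d with
      | zero =>
        have hsub : univ.filter (fun v => graphDist Q v z = 0) ⊆ {z} := by
          intro v hv
          rw [Finset.mem_filter] at hv
          have := (hconn.dist_eq_zero_iff).mp hv.2
          simp [this]
        have := Finset.card_le_card hsub
        simp only [Finset.card_singleton] at this
        calc ((univ.filter (fun v => graphDist Q v z = 0)).card : ℝ) ≤ 1 := by exact_mod_cast this
        _ = p⁻¹ ^ 0 := by simp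
      | succ d ih =>
        have hsub : univ.filter (fun v => graphDist Q v z = d + 1) ⊆
            (univ.filter (fun v => graphDist Q v z = d)).biUnion
              (fun u => (chainGraph Q).neighborFinset u) := by
          intro v hv
          rw [Finset.mem_filter] at hv
          obtain ⟨w, hw⟩ := hconn.exists_walk_length_eq_dist v z
          have hlen : w.length = d + 1 := by rw [hw]; exact hv.2
          cases w with
          | nil => simp at hlen
          | @cons _ b _ hadj w' =>
            rw [SimpleGraph.Walk.length_cons] at hlen
            have hlen' : w'.length = d := by omega
            have hub : graphDist Q b z ≤ d := by
              have := SimpleGraph.dist_le w'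
              rw [hlen'] at this
              exact this
            have hlb : d ≤ graphDist Q b z := by
              have htri : (chainGraph Q).dist v z ≤ (chainGraph Q).dist v b + (chainGraph Q).dist b z :=
                hconn.dist_triangle
              have hvb : (chainGraph Q).dist v b ≤ 1 := by
                have := SimpleGraph.dist_le (SimpleGraph.Walk.cons hadj SimpleGraph.Walk.nil)
                simpa using this
              have : graphDist Q v z = d + 1 := hv.2
              simp only [graphDist] at this ⊢
              omega
            have hbz : graphDist Q b z = d := le_antisymm hub hlb
            rw [Finset.mem_biUnion]
            exact ⟨b, Finset.mem_filter.mpr ⟨mem_univ _, hbz⟩,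
              (SimpleGraph.mem_neighborFinset _ _ _).mpr hadj.symm⟩
        calc ((univ.filter (fun v => graphDist Q v z = d + 1)).card : ℝ)
            ≤ (((univ.filter (fun v => graphDist Q v z = d)).biUnion
              (fun u => (chainGraph Q).neighborFinset u)).card : ℝ) := by
              exact_mod_cast Finset.card_le_card hsub
        _ ≤ ∑ u ∈ univ.filter (fun v => graphDist Q v z = d),
              (((chainGraph Q).neighborFinset u).card : ℝ) := by
              have := Finset.card_biUnion_le (s := univ.filter (fun v => graphDist Q v z = d))
                (t := fun u => (chainGraph Q).neighborFinset u)
              exact_mod_cast this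
        _ ≤ ∑ u ∈ univ.filter (fun v => graphDist Q v z = d), p⁻¹ :=
              Finset.sum_le_sum (fun u _ => hdeg u)
        _ = ((univ.filter (fun v => graphDist Q v z = d)).card : ℝ) * p⁻¹ := by
              rw [Finset.sum_const, nsmul_eq_mul]
        _ ≤ p⁻¹ ^ d * p⁻¹ :=
              mul_le_mul_of_nonneg_right ih (inv_nonneg.mpr hppos.le)
        _ = p⁻¹ ^ (d + 1) := by rw [pow_succ]
    -- mean and entropy
    set m := mean π f with hmdef
    have hm : 0 < m := by
      rw [hmdef, mean]
      apply Finset.sum_pos (fun x _ => mul_pos (hπpos x) (hf x)) univ_nonempty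
    have hm2 : ∑ x : X, π x * f x = m := by rw [hmdef, mean]
    have hEnt : entropy π f = ∑ x : X, π x * (f x * Real.log (f x / m) - f x + m) := by
      have hterm : ∀ x : X, π x * (f x * Real.log (f x / m) - f x + m)
          = π x * (f x * Real.log (f x)) - π x * f x * Real.log m - π x * f x + π x * m := by
        intro x
        rw [Real.log_div (hf x).ne' hm.ne']
        ring
      calc entropy π f
          = (∑ x : X, π x * (f x * Real.log (f x))) - (∑ x : X, π x * f x) * Real.log m
            - (∑ x : X, π x * f x) + (∑ x : X, π x) * m := by
            rw [entropy, mean, mean, hm2, hπsum]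
            ring
      _ = ∑ x : X, (π x * (f x * Real.log (f x)) - π x * f x * Real.log m
            - π x * f x + π x * m) := by
            rw [Finset.sum_add_distrib, Finset.sum_sub_distrib, Finset.sum_sub_distrib,
              ← Finset.sum_mul, ← Finset.sum_mul]
      _ = ∑ x : X, π x * (f x * Real.log (f x / m) - f x + m) :=
            Finset.sum_congr rfl (fun x _ => (hterm x).symm)
    -- fStar basic facts
    have hfsge : ∀ x : X, f x ≤ fStar Q r f x := by
      intro x
      have h0 : graphDist Q x x = 0 := SimpleGraph.dist_self
      have h1 := Finset.le_sup' (fun z => r ^ (-(graphDist Q x z : ℤ)) * f z) (mem_univ x)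
      rw [h0] at h1
      exact le_trans (le_of_eq (by norm_num)) h1
    -- maximizer choice
    have hchoice : ∀ x : X, ∃ z : X, fStar Q r f x = r ^ (-(graphDist Q x z : ℤ)) * f z := by
      intro x
      obtain ⟨b, -, hb⟩ := Finset.exists_mem_eq_sup' univ_nonempty
        (fun z => r ^ (-(graphDist Q x z : ℤ)) * f z)
      exact ⟨b, hb⟩
    choose zm hzm using hchoice
    -- key disjointness: the maximizer is a fixed point of the regularization
    have hfix : ∀ x w : X, r ^ (-(graphDist Q (zm x) w : ℤ)) * f w ≤ f (zm x) := by
      intro x w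
      set z := zm x
      have htri : graphDist Q x w ≤ graphDist Q x z + graphDist Q z w := hconn.dist_triangle
      have h1 : r ^ (-(graphDist Q x w : ℤ)) * f w ≤ fStar Q r f x :=
        Finset.le_sup' (fun z => r ^ (-(graphDist Q x z : ℤ)) * f z) (mem_univ w)
      have h2 : r ^ (-((graphDist Q x z : ℤ) + (graphDist Q z w : ℤ))) * f w
          ≤ r ^ (-(graphDist Q x w : ℤ)) * f w := by
        apply mul_le_mul_of_nonneg_right _ (hf w).le
        apply zpow_le_zpow_right₀ hr1
        push_cast
        omega
      have h3 : r ^ (-((graphDist Q x z : ℤ) + (graphDist Q z w : ℤ)))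
          = r ^ (-(graphDist Q x z : ℤ)) * r ^ (-(graphDist Q z w : ℤ)) := by
        rw [← zpow_add₀ hrpos.ne']
        ring_nf
      have h4 : r ^ (-(graphDist Q x z : ℤ)) * (r ^ (-(graphDist Q z w : ℤ)) * f w)
          ≤ r ^ (-(graphDist Q x z : ℤ)) * f z := by
        calc r ^ (-(graphDist Q x z : ℤ)) * (r ^ (-(graphDist Q z w : ℤ)) * f w)
            = r ^ (-((graphDist Q x z : ℤ) + (graphDist Q z w : ℤ))) * f w := by rw [h3]; ring
        _ ≤ r ^ (-(graphDist Q x w : ℤ)) * f w := h2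
        _ ≤ fStar Q r f x := h1
        _ = r ^ (-(graphDist Q x z : ℤ)) * f z := hzm x
      have hrz : 0 < r ^ (-(graphDist Q x z : ℤ)) := zpow_pos hrpos _
      exact le_of_mul_le_mul_left h4 hrz
    have hzm_nfix : ∀ x : X, fStar Q r f (zm x) ≤ f (zm x) :=
      fun x => Finset.sup'_le _ _ (fun w _ => hfix x w)
    -- the set of "chargers"
    set K := 3 * Real.log 6 with hKdef
    have hKpos : 0 < K := by
      rw [hKdef]
      have : (0:ℝ) < Real.log 6 := Real.log_pos (by norm_num)
      linarith
    set S : Finset X := univ.filter (fun x => f x < fStar Q r f x) with hSdef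
    set a : X → ℝ := fun x => π x * (f x * Real.log (f x / m) - f x + m) with hadef
    set e : X → ℝ := fun x =>
      K * (π x * (fStar Q r f x - f x)) - a x with hedef
    have ha_nonneg : ∀ x : X, 0 ≤ a x := by
      intro x
      apply mul_nonneg (hπpos x).le
      exact aux_L1 (f x) m (hf x) hm
    -- distance of chargers to their maximizers is ≥ 1
    have hD1 : ∀ x ∈ S, 1 ≤ graphDist Q x (zm x) := by
      intro x hx
      rw [hSdef, Finset.mem_filter] at hx
      by_contra hcon
      have h0 : graphDist Q x (zm x) = 0 := by omega
      have hxz : x = zm x := (hconn.dist_eq_zero_iff).mp h0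
      have := hzm x
      rw [h0] at this
      norm_num at this
      rw [← hxz] at this
      linarith [hx.2]
    -- zm maps S outside S
    have hmapsto : ∀ x ∈ S, zm x ∈ univ \ S := by
      intro x hx
      rw [Finset.mem_sdiff]
      refine ⟨mem_univ _, ?_⟩
      rw [hSdef, Finset.mem_filter]
      push_neg
      intro
      exact hzm_nfix x
    -- main decomposition
    rw [hEnt]
    have hgoal2 : K * mean π (fun x => fStar Q r f x - f x)
        = ∑ x ∈ S, (K * (π x * (fStar Q r f x - f x))) := by
      rw [mean, Finset.mul_sum]
      rw [Finset.sum_subset (Finset.subset_univ S)]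
      intro x _ hxS
      rw [hSdef, Finset.mem_filter] at hxS
      push_neg at hxS
      have h1 : fStar Q r f x ≤ f x := hxS (mem_univ x)
      have h2 : fStar Q r f x = f x := le_antisymm h1 (hfsge x)
      rw [h2]
      ring
    have hsplit : ∑ x ∈ S, (K * (π x * (fStar Q r f x - f x)))
        = ∑ x ∈ S, e x + ∑ x ∈ S, a x := by
      rw [← Finset.sum_add_distrib]
      apply Finset.sum_congr rfl
      intro x _
      rw [hedef]
      ring
    -- the crucial fiberwise bound
    have hclaimA : ∑ x ∈ S, e x ≤ ∑ z ∈ univ \ S, a z := by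
      rw [← Finset.sum_fiberwise_of_maps_to hmapsto e]
      apply Finset.sum_le_sum
      intro z hz
      -- per-z bound
      set M := univ.sup (fun x => graphDist Q x (zm x)) with hMdef
      set F := S.filter (fun x => zm x = z) with hFdef
      have hFd : ∀ x ∈ F, graphDist Q x z ∈ Finset.Icc 1 M := by
        intro x hx
        rw [hFdef, Finset.mem_filter] at hx
        rw [Finset.mem_Icc]
        constructor
        · have := hD1 x hx.1
          rwa [hx.2] at this
        · have : graphDist Q x z = graphDist Q x (zm x) := by rw [hx.2]
          rw [this]
          exact Finset.le_sup (f := fun x => graphDist Q x (zm x)) (mem_univ x)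
      rw [← Finset.sum_fiberwise_of_maps_to hFd e]
      -- bound each distance class
      have hclass : ∀ d ∈ Finset.Icc 1 M,
          ∑ x ∈ F.filter (fun x => graphDist Q x z = d), e x
          ≤ π z * max 0 (K * (4:ℝ)⁻¹ ^ d * f z - (215/216) * m * (4:ℝ) ^ d) := by
        intro d hd
        have hd1 : 1 ≤ d := (Finset.mem_Icc.mp hd).1
        set W : ℝ := K * (p^2/4) ^ d * f z - (215/216) * m with hWdef
        set B : ℝ := p⁻¹ ^ d * (π z * max 0 W) with hBdef
        have hBnn : 0 ≤ B := by
          rw [hBdef]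
          apply mul_nonneg (by positivity)
          exact mul_nonneg (hπpos z).le (le_max_left _ _)
        have hux : ∀ x ∈ F.filter (fun x => graphDist Q x z = d), e x ≤ B := by
          intro x hx
          rw [Finset.mem_filter] at hx
          have hxF := hx.1
          have hxd : graphDist Q x z = d := hx.2
          rw [hFdef, Finset.mem_filter] at hxF
          have hxz : zm x = z := hxF.2
          -- fStar x = (p²/4)^d * f z
          have hfsx : fStar Q r f x = (p^2/4) ^ d * f z := by
            have h1 := hzm x
            rw [hxz, hxd] at h1
            rw [h1]
            congr 1
            rw [zpow_neg, zpow_natCast, ← inv_pow]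
            congr 1
            rw [hrdef]
            rw [inv_div]
          -- entropy lower bound at x
          have hpsix : (215/216) * m - K * f x ≤ f x * Real.log (f x / m) - f x + m := by
            have := aux_psi_lower (f x) m (hf x) hm
            rw [← hKdef] at this
            exact this
          have hex : e x ≤ π x * W := by
            have h2 : π x * ((215/216) * m - K * f x)
                ≤ π x * (f x * Real.log (f x / m) - f x + m) :=
              mul_le_mul_of_nonneg_left hpsix (hπpos x).le
            simp only [hedef, hadef]
            rw [hfsx, hWdef]
            nlinarith [hπpos x]
          rcases le_or_gt W 0 with hW | hW
          · have : π x * W ≤ 0 := mul_nonpos_of_nonneg_of_nonpos (hπpos x).le hW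
            linarith [hBnn]
          · have hpix : π x ≤ p⁻¹ ^ d * π z := by
              have := hdist_pi x z
              rwa [hxd] at this
            have : π x * W ≤ (p⁻¹ ^ d * π z) * W :=
              mul_le_mul_of_nonneg_right hpix hW.le
            have hmW : max 0 W = W := max_eq_right hW.le
            rw [hBdef, hmW]
            calc e x ≤ π x * W := hex
            _ ≤ (p⁻¹ ^ d * π z) * W := this
            _ = p⁻¹ ^ d * (π z * W) := by ring
        -- sum over the class
        have hcard : ((F.filter (fun x => graphDist Q x z = d)).card : ℝ) ≤ p⁻¹ ^ d := by
          have hsub : F.filter (fun x => graphDist Q x z = d)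
              ⊆ univ.filter (fun v => graphDist Q v z = d) := by
            intro x hx
            rw [Finset.mem_filter] at hx ⊢
            exact ⟨mem_univ _, hx.2⟩
          calc ((F.filter (fun x => graphDist Q x z = d)).card : ℝ)
              ≤ ((univ.filter (fun v => graphDist Q v z = d)).card : ℝ) := by
                exact_mod_cast Finset.card_le_card hsub
          _ ≤ p⁻¹ ^ d := hsph z d
        have hsum1 : ∑ x ∈ F.filter (fun x => graphDist Q x z = d), e x
            ≤ ((F.filter (fun x => graphDist Q x z = d)).card : ℝ) * B := by
          have := Finset.sum_le_card_nsmul (F.filter (fun x => graphDist Q x z = d)) e B hux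
          rwa [nsmul_eq_mul] at this
        have hsum2 : ((F.filter (fun x => graphDist Q x z = d)).card : ℝ) * B
            ≤ p⁻¹ ^ d * B := mul_le_mul_of_nonneg_right hcard hBnn
        -- algebra: p⁻¹^d * B ≤ π z * max 0 (K 4⁻¹^d f z − (215/216) m 4^d)
        have halg : p⁻¹ ^ d * B ≤ π z * max 0 (K * (4:ℝ)⁻¹ ^ d * f z - (215/216) * m * (4:ℝ) ^ d) := by
          rw [hBdef]
          have hc : (0:ℝ) ≤ p⁻¹ ^ d * p⁻¹ ^ d := by positivity
          have h1 : p⁻¹ ^ d * (p⁻¹ ^ d * (π z * max 0 W))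
              = π z * ((p⁻¹ ^ d * p⁻¹ ^ d) * max 0 W) := by ring
          rw [h1]
          apply mul_le_mul_of_nonneg_left _ (hπpos z).le
          rw [mul_max_of_nonneg _ _ hc, mul_zero]
          apply max_le_max le_rfl
          rw [hWdef]
          have hquad : p⁻¹ ^ d * p⁻¹ ^ d * (K * (p^2/4) ^ d * f z)
              = K * (4:ℝ)⁻¹ ^ d * f z := by
            have : p⁻¹ ^ d * p⁻¹ ^ d * (p^2/4) ^ d = (4:ℝ)⁻¹ ^ d := by
              rw [← mul_pow, ← mul_pow]
              congr 1
              field_simp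
            calc p⁻¹ ^ d * p⁻¹ ^ d * (K * (p^2/4) ^ d * f z)
                = K * (p⁻¹ ^ d * p⁻¹ ^ d * (p^2/4) ^ d) * f z := by ring
            _ = K * (4:ℝ)⁻¹ ^ d * f z := by rw [this]
          have hquad2 : (4:ℝ) ^ d ≤ p⁻¹ ^ d * p⁻¹ ^ d := by
            rw [← mul_pow]
            apply pow_le_pow_left₀ (by norm_num)
            have h2p : (2:ℝ) ≤ p⁻¹ := by
              rw [le_inv_comm₀ (by norm_num) hppos]
              linarith
            nlinarith
          have hmnn : (0:ℝ) ≤ (215/216) * m := by positivity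
          have : (215/216) * m * (4:ℝ)^d ≤ p⁻¹ ^ d * p⁻¹ ^ d * ((215/216) * m) := by
            calc (215/216) * m * (4:ℝ)^d ≤ (215/216) * m * (p⁻¹ ^ d * p⁻¹ ^ d) :=
              mul_le_mul_of_nonneg_left hquad2 hmnn
            _ = p⁻¹ ^ d * p⁻¹ ^ d * ((215/216) * m) := by ring
          calc p⁻¹ ^ d * p⁻¹ ^ d * (K * (p^2/4) ^ d * f z - 215/216 * m)
              = p⁻¹ ^ d * p⁻¹ ^ d * (K * (p^2/4) ^ d * f z)
                - p⁻¹ ^ d * p⁻¹ ^ d * ((215/216) * m) := by ring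
          _ ≤ K * (4:ℝ)⁻¹ ^ d * f z - (215/216) * m * (4:ℝ) ^ d := by
              rw [hquad]
              linarith
        linarith [hsum1, hsum2, halg]
      calc ∑ d ∈ Finset.Icc 1 M, ∑ x ∈ F.filter (fun x => graphDist Q x z = d), e x
          ≤ ∑ d ∈ Finset.Icc 1 M,
            π z * max 0 (K * (4:ℝ)⁻¹ ^ d * f z - (215/216) * m * (4:ℝ) ^ d) :=
            Finset.sum_le_sum hclass
      _ = π z * ∑ d ∈ Finset.Icc 1 M,
            max 0 (K * (4:ℝ)⁻¹ ^ d * f z - (215/216) * m * (4:ℝ) ^ d) := by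
            rw [Finset.mul_sum]
      _ ≤ π z * (f z * Real.log (f z / m) - f z + m) := by
            apply mul_le_mul_of_nonneg_left _ (hπpos z).le
            rw [hKdef]
            exact aux_keyNumeric M (f z) m (hf z) hm
      _ = a z := by rw [hadef]
    have hfinal : ∑ z ∈ univ \ S, a z + ∑ x ∈ S, a x = ∑ x : X, a x := by
      rw [Finset.sum_sdiff (Finset.subset_univ S)]
    calc K * mean π (fun x => fStar Q r f x - f x)
        = ∑ x ∈ S, e x + ∑ x ∈ S, a x := by rw [hgoal2, hsplit]
    _ ≤ ∑ z ∈ univ \ S, a z + ∑ x ∈ S, a x := by linarith [hclaimA]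
    _ = ∑ x : X, a x := hfinal
    _ = ∑ x : X, π x * (f x * Real.log (f x / m) - f x + m) := by rw [hadef]


end
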